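/- The map sending a pair (p₀, p₁) ∈ (0,1) × (0,1) to (arctanh(p₁−p₀), log(p₀p₁/((1−p₀)(1−p₁)))) is a bijection from (0,1) × (0,1) onto ℝ × ℝ. In other words, for every (θ, φ) ∈ ℝ² there exists a unique pair (p₀, p₁) ∈ (0,1)² whose risk difference equals tanh(θ) and whose log odds product is φ. (Note p₁ − p₀ ∈ (−1,1), so arctanh(p₁−p₀) is well defined.) -/

import Mathlib

/-- `arctanh x = (1/2) log((1+x)/(1−x))` for `x ∈ (−1,1)`. -/
noncomputable def arctanh (x : ℝ) : ℝ := (1 / 2) * Real.log ((1 + x) / (1 - x))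

lemma arctanh_eq_iff {x θ : ℝ} (h1 : -1 < x) (h2 : x < 1) :
    arctanh x = θ ↔ x = (Real.exp (2*θ) - 1) / (Real.exp (2*θ) + 1) := by
  have hp : (0:ℝ) < (1 + x) / (1 - x) := div_pos (by linarith) (by linarith)
  have hE : (0:ℝ) < Real.exp (2*θ) := Real.exp_pos _
  have hx1 : (1:ℝ) - x ≠ 0 := by linarith
  have hE1 : Real.exp (2*θ) + 1 ≠ 0 := by linarith
  constructor
  · intro h
    have hlog : Real.log ((1 + x) / (1 - x)) = 2*θ := by
      unfold arctanh at h; linarith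
    have h2' : (1 + x) / (1 - x) = Real.exp (2*θ) := by
      rw [← hlog, Real.exp_log hp]
    rw [div_eq_iff hx1] at h2'
    rw [eq_div_iff hE1]
    nlinarith [h2']
  · intro h
    have h2' : (1 + x) / (1 - x) = Real.exp (2*θ) := by
      rw [eq_div_iff hE1] at h
      rw [div_eq_iff hx1]
      nlinarith [h]
    unfold arctanh
    rw [h2', Real.log_exp]
    ring

theorem rd_logOddsProduct_bijection (θ φ : ℝ) :
    ∃! p : ℝ × ℝ, p.1 ∈ Set.Ioo (0:ℝ) 1 ∧ p.2 ∈ Set.Ioo (0:ℝ) 1 ∧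
      arctanh (p.2 - p.1) = θ ∧
      Real.log ((p.1 * p.2) / ((1 - p.1) * (1 - p.2))) = φ := by
  set E := Real.exp (2*θ) with hEdef
  have hE : (0:ℝ) < E := Real.exp_pos _
  set d : ℝ := (E - 1) / (E + 1) with hddef
  set q : ℝ := Real.exp φ with hqdef
  have hq : (0:ℝ) < q := Real.exp_pos _
  have hd1 : -1 < d := by
    rw [hddef, lt_div_iff₀ (by linarith : (0:ℝ) < E + 1)]; linarith
  have hd2 : d < 1 := by
    rw [hddef, div_lt_one (by linarith : (0:ℝ) < E + 1)]; linarith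
  set f : ℝ → ℝ := fun p => p*(p+d) - q*((1-p)*(1-p-d)) with hfdef
  set a : ℝ := max 0 (-d) with hadef
  set b : ℝ := min 1 (1-d) with hbdef
  have hab : a < b := by
    rw [hadef, hbdef]
    apply max_lt <;> apply lt_min <;> linarith
  have ha0 : 0 ≤ a := le_max_left _ _
  have had : -d ≤ a := le_max_right _ _
  have hb1 : b ≤ 1 := min_le_left _ _
  have hbd : b ≤ 1 - d := min_le_right _ _
  have hcont : Continuous f := by fun_prop
  have hder : ∀ p : ℝ, HasDerivAt f (2*p + d + q*(2 - 2*p - d)) p := by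
    intro p
    have h1 : HasDerivAt (fun p:ℝ => p*(p+d)) (1*(p+d) + p*1) p :=
      (hasDerivAt_id p).mul ((hasDerivAt_id p).add_const d)
    have h2 : HasDerivAt (fun p:ℝ => (1-p)*(1-p-d)) ((-1)*(1-p-d) + (1-p)*(-1)) p :=
      ((hasDerivAt_id p).const_sub 1).mul (((hasDerivAt_id p).const_sub 1).sub_const d)
    have := h1.sub ((h2.const_mul q))
    refine this.congr_deriv ?_
    ring
  have hmono : StrictMonoOn f (Set.Icc a b) := by
    apply strictMonoOn_of_deriv_pos (convex_Icc a b) hcont.continuousOn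
    intro p hp
    rw [interior_Icc] at hp
    rw [(hder p).deriv]
    have hp1 : 0 < p := lt_of_le_of_lt ha0 hp.1
    have hp2 : -d < p := lt_of_le_of_lt had hp.1
    have hp3 : p < 1 := lt_of_lt_of_le hp.2 hb1
    have hp4 : p < 1 - d := lt_of_lt_of_le hp.2 hbd
    nlinarith
  have hfa : f a < 0 := by
    rcases le_total d 0 with h | h
    · have : a = -d := by rw [hadef, max_eq_right (by linarith)]
      rw [this, hfdef]
      simp only
      nlinarith
    · have : a = 0 := by rw [hadef, max_eq_left (by linarith)]
      rw [this, hfdef]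
      simp only
      nlinarith
  have hfb : 0 < f b := by
    rcases le_total d 0 with h | h
    · have : b = 1 := by rw [hbdef, min_eq_left (by linarith)]
      rw [this, hfdef]
      simp only
      nlinarith
    · have : b = 1 - d := by rw [hbdef, min_eq_right (by linarith)]
      rw [this, hfdef]
      simp only
      nlinarith
  obtain ⟨c, hc, hfc⟩ : ∃ c ∈ Set.Ioo a b, f c = 0 := by
    have := intermediate_value_Ioo hab.le hcont.continuousOn
    have h0 : (0:ℝ) ∈ Set.Ioo (f a) (f b) := ⟨hfa, hfb⟩
    obtain ⟨c, hc, hfc⟩ := this h0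
    exact ⟨c, hc, hfc⟩
  have hc1 : 0 < c := lt_of_le_of_lt ha0 hc.1
  have hc2 : -d < c := lt_of_le_of_lt had hc.1
  have hc3 : c < 1 := lt_of_lt_of_le hc.2 hb1
  have hc4 : c < 1 - d := lt_of_lt_of_le hc.2 hbd
  refine ⟨(c, c + d), ⟨⟨hc1, hc3⟩, ⟨show (0:ℝ) < c + d by linarith, show c + d < 1 by linarith⟩, ?_, ?_⟩, ?_⟩
  · have : c + d - c = d := by ring
    rw [this]
    exact (arctanh_eq_iff hd1 hd2).mpr rfl
  · have hden : (0:ℝ) < (1 - c) * (1 - (c + d)) := by nlinarith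
    have hnum : c * (c + d) = q * ((1 - c) * (1 - (c + d))) := by
      have h0 : c * (c + d) - q * ((1 - c) * (1 - c - d)) = 0 := hfc
      linear_combination h0
    have hratio : (c * (c + d)) / ((1 - c) * (1 - (c + d))) = q := by
      rw [hnum, mul_div_assoc, div_self hden.ne', mul_one]
    rw [hratio, hqdef, Real.log_exp]
  · rintro ⟨p₀, p₁⟩ ⟨⟨hp01, hp02⟩, ⟨hp11, hp12⟩, hθ, hφ⟩
    simp only at hp01 hp02 hp11 hp12 hθ hφ ⊢
    have hdiff1 : -1 < p₁ - p₀ := by linarith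
    have hdiff2 : p₁ - p₀ < 1 := by linarith
    have hd' : p₁ - p₀ = d := (arctanh_eq_iff hdiff1 hdiff2).mp hθ
    have hpos : (0:ℝ) < p₀ * p₁ / ((1 - p₀) * (1 - p₁)) :=
      div_pos (mul_pos hp01 hp11) (mul_pos (by linarith) (by linarith))
    have harg : p₀ * p₁ / ((1 - p₀) * (1 - p₁)) = q := by
      rw [hqdef, ← hφ, Real.exp_log hpos]
    have hden : (0:ℝ) < (1 - p₀) * (1 - p₁) := mul_pos (by linarith) (by linarith)
    have hnum : p₀ * p₁ = q * ((1 - p₀) * (1 - p₁)) := by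
      rw [← harg, div_mul_cancel₀ _ hden.ne']
    have hfp : f p₀ = 0 := by
      show p₀ * (p₀ + d) - q * ((1 - p₀) * (1 - p₀ - d)) = 0
      linear_combination hnum - (p₀ + q * (1 - p₀)) * hd'
    have hp0mem : p₀ ∈ Set.Icc a b := by
      constructor
      · rw [hadef]; apply max_le <;> linarith
      · rw [hbdef]; apply le_min <;> linarith
    have hcmem : c ∈ Set.Icc a b := ⟨hc.1.le, hc.2.le⟩
    have : p₀ = c := hmono.injOn hp0mem hcmem (by rw [hfp, hfc])
    exact Prod.ext this (by simp only; linarith)
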